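/- Fix an integer t \ge 1. There exist constants 0 < c_1 < c_2 < 1 (depending only on t) such that for every prime power q, the quantity \prod_{j=1}^t \prod_{i \ge 1} (1 - 1/q^{ij})^{N(q;j)} lies in the interval [c_1, c_2]. -/

import Mathlib

open Polynomial in
lemma stmt6_irred_inj (F : Type) [Field F] [Fintype F] (j : ℕ) :
    Function.Injective (fun p : {p : Polynomial F // p.Monic ∧ Irreducible p ∧
        p.natDegree = j ∧ p.coeff 0 ≠ 0} => (fun i : Fin j => (p : Polynomial F).coeff i)) := by
  rintro ⟨p, hp, hip, hdp, _⟩ ⟨r, hr, hir, hdr, _⟩ h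
  simp only [Subtype.mk.injEq] at h ⊢
  refine Polynomial.ext fun n => ?_
  rcases lt_trichotomy n j with hn | hn | hn
  · exact congrFun h ⟨n, hn⟩
  · subst hn
    rw [← hdp, hp.coeff_natDegree, hdp, ← hdr, hr.coeff_natDegree]
  · rw [Polynomial.coeff_eq_zero_of_natDegree_lt (by omega),
      Polynomial.coeff_eq_zero_of_natDegree_lt (by omega)]

/-- `N(q;j)`: the number of monic irreducible polynomials of degree `j` over the
finite field `F` with nonzero constant term. -/
noncomputable def numIrred (F : Type) [Field F] [Fintype F] (j : ℕ) : ℕ :=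
  Nat.card {p : Polynomial F // p.Monic ∧ Irreducible p ∧ p.natDegree = j ∧ p.coeff 0 ≠ 0}

lemma stmt6_numIrred_le (F : Type) [Field F] [Fintype F] (j : ℕ) :
    numIrred F j ≤ Fintype.card F ^ j := by
  have := Nat.card_le_card_of_injective _ (stmt6_irred_inj F j)
  simpa [numIrred, Nat.card_eq_fintype_card] using this

open Polynomial in
lemma stmt6_le_numIrred_one (F : Type) [Field F] [Fintype F] :
    Fintype.card F - 1 ≤ numIrred F 1 := by
  classical
  have : Finite {p : Polynomial F // p.Monic ∧ Irreducible p ∧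
      p.natDegree = 1 ∧ p.coeff 0 ≠ 0} := Finite.of_injective _ (stmt6_irred_inj F 1)
  have hinj : Function.Injective (fun u : Fˣ =>
      (⟨X - C (u : F), monic_X_sub_C _, irreducible_X_sub_C _,
        natDegree_X_sub_C _, by simp [coeff_sub, coeff_C]⟩ :
        {p : Polynomial F // p.Monic ∧ Irreducible p ∧ p.natDegree = 1 ∧ p.coeff 0 ≠ 0})) := by
    intro u v h
    simp only [Subtype.mk.injEq, sub_right_inj, C_inj] at h
    exact Units.ext h
  calc Fintype.card F - 1 = Nat.card Fˣ := by
        rw [Nat.card_eq_fintype_card, Fintype.card_units]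
    _ ≤ numIrred F 1 := Nat.card_le_card_of_injective _ hinj

lemma stmt6_key (q : ℝ) (hq : 2 ≤ q) (j N : ℕ) (hj : 1 ≤ j) (hN : (N : ℝ) ≤ q ^ j) :
    ∃ T : ℝ, (∏' i : ℕ, (1 - 1 / q ^ ((i + 1) * j)) ^ N) = Real.exp T ∧
      -4 ≤ T ∧ T ≤ 0 ∧ T ≤ (N : ℝ) * Real.log (1 - 1 / q ^ j) := by
  have hq0 : (0:ℝ) < q := by linarith
  have hqj : (2:ℝ) ≤ q ^ j :=
    le_trans (le_self_pow₀ one_le_two (by omega)) (pow_le_pow_left₀ (by norm_num) hq j)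
  set r : ℝ := 1 / q ^ j with hrdef
  have hr0 : 0 < r := by positivity
  have hr2 : r ≤ 1 / 2 := by
    rw [hrdef, div_le_div_iff₀ (by positivity) (by norm_num)]; linarith
  have hr1 : r < 1 := by linarith
  have hx : ∀ i : ℕ, (1 : ℝ) / q ^ ((i + 1) * j) = r ^ (i + 1) := by
    intro i
    rw [hrdef, one_div_pow, ← pow_mul, mul_comm]
  have hxle : ∀ i : ℕ, r ^ (i + 1) ≤ 1 / 2 := fun i =>
    le_trans (le_trans (pow_le_pow_of_le_one hr0.le hr1.le (by omega)) (pow_one r).le) hr2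
  have hpos : ∀ i : ℕ, (0:ℝ) < 1 - r ^ (i + 1) := fun i => by
    have := hxle i; linarith
  have hlogb : ∀ i : ℕ, -Real.log (1 - r ^ (i + 1)) ≤ 2 * r ^ (i + 1) := by
    intro i
    have hp := hpos i
    have h1 : Real.log (1 - r ^ (i+1))⁻¹ ≤ (1 - r ^ (i+1))⁻¹ - 1 :=
      Real.log_le_sub_one_of_pos (by positivity)
    rw [Real.log_inv] at h1
    have h3 : (1 - r ^ (i+1)) * (1 - r ^ (i+1))⁻¹ = 1 := mul_inv_cancel₀ hp.ne'
    have h4 : (0:ℝ) < (1 - r ^ (i+1))⁻¹ := by positivity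
    have h5 := hxle i
    have h6 : (0:ℝ) ≤ r ^ (i+1) := by positivity
    nlinarith
  have hgeo : Summable fun i : ℕ => r ^ (i + 1) := by
    simpa [pow_succ] using (summable_geometric_of_lt_one hr0.le hr1).mul_right r
  have hsumlog : Summable fun i : ℕ => Real.log (1 - r ^ (i + 1)) := by
    rw [← summable_neg_iff]
    apply Summable.of_nonneg_of_le (fun i => ?_) hlogb (hgeo.mul_left 2)
    have := hpos i
    have : 1 - r ^ (i+1) ≤ 1 := by nlinarith [pow_pos hr0 (i+1)]
    simpa using Real.log_nonpos (by linarith [hpos i]) this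
  have hS : Summable fun i : ℕ => (N : ℝ) * Real.log (1 - r ^ (i + 1)) :=
    hsumlog.mul_left _
  refine ⟨∑' i : ℕ, (N : ℝ) * Real.log (1 - r ^ (i + 1)), ?_, ?_, ?_, ?_⟩
  · have h0 := Real.rexp_tsum_eq_tprod (f := fun i => (1 - r ^ (i + 1)) ^ N)
      (fun i => pow_pos (hpos i) N) (by simpa [Real.log_pow] using hS)
    rw [tprod_congr (fun i => by rw [hx i])]
    rw [← h0]
    congr 1
    exact tsum_congr fun i => by rw [Real.log_pow]
  · have hterm : ∀ i : ℕ, (-(2 * (N:ℝ))) * r ^ (i + 1) ≤ (N : ℝ) * Real.log (1 - r ^ (i + 1)) := by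
      intro i
      have h1 := hlogb i
      have h2 : -(2 * r ^ (i+1)) ≤ Real.log (1 - r ^ (i+1)) := by linarith
      nlinarith [Nat.cast_nonneg (α := ℝ) N, mul_le_mul_of_nonneg_left h2 (Nat.cast_nonneg (α := ℝ) N)]
    have hle := Summable.tsum_le_tsum hterm (hgeo.mul_left _) hS
    have hsum : ∑' i : ℕ, (-(2 * (N:ℝ))) * r ^ (i + 1) = (-(2 * (N:ℝ))) * (r * (1 - r)⁻¹) := by
      rw [tsum_mul_left]
      congr 1
      calc ∑' i : ℕ, r ^ (i + 1) = ∑' i : ℕ, r * r ^ i := tsum_congr fun i => by ring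
        _ = r * (1 - r)⁻¹ := by rw [tsum_mul_left, tsum_geometric_of_lt_one hr0.le hr1]
    rw [hsum] at hle
    refine le_trans ?_ hle
    have hNr : (N : ℝ) * r ≤ 1 := by
      rw [hrdef, mul_one_div, div_le_one (by positivity)]
      exact hN
    have h3 : (1 - r) * (1 - r)⁻¹ = 1 := mul_inv_cancel₀ (by linarith)
    have h4 : (0:ℝ) < (1 - r)⁻¹ := inv_pos.2 (by linarith)
    have h5 : (1 - r)⁻¹ ≤ 2 := by nlinarith
    nlinarith [Nat.cast_nonneg (α := ℝ) N, mul_nonneg (Nat.cast_nonneg (α := ℝ) N) hr0.le]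
  · refine tsum_nonpos fun i => ?_
    have h1 : 1 - r ^ (i+1) ≤ 1 := by nlinarith [pow_pos hr0 (i+1)]
    exact mul_nonpos_of_nonneg_of_nonpos (Nat.cast_nonneg N) (Real.log_nonpos (by linarith [hpos i]) h1)
  · have hneg := Summable.le_tsum hS.neg 0 (fun i _ => by
      have h1 : 1 - r ^ (i+1) ≤ 1 := by nlinarith [pow_pos hr0 (i+1)]
      simpa using mul_nonpos_of_nonneg_of_nonpos (Nat.cast_nonneg (α := ℝ) N)
        (Real.log_nonpos (by linarith [hpos i]) h1))
    rw [tsum_neg] at hneg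
    simp only [pow_one, zero_add] at hneg
    linarith

/-- For fixed `t ≥ 1`, there are constants `0 < c₁ < c₂ < 1` depending only on `t`
such that for every prime power `q` (i.e. the cardinality of any finite field `F`),
`∏_{j=1}^t ∏_{i ≥ 1} (1 - 1/q^{ij})^{N(q;j)}` lies in `[c₁, c₂]`. -/
theorem stmt6 (t : ℕ) (ht : 1 ≤ t) :
    ∃ c₁ c₂ : ℝ, 0 < c₁ ∧ c₁ < c₂ ∧ c₂ < 1 ∧
      ∀ (F : Type) [Field F] [Fintype F],
        (∏ j ∈ Finset.Icc 1 t, ∏' i : ℕ,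
            (1 - 1 / (Fintype.card F : ℝ) ^ ((i + 1) * j)) ^ (numIrred F j)) ∈
          Set.Icc c₁ c₂ := by
  have ht' : (1:ℝ) ≤ (t:ℝ) := by exact_mod_cast ht
  refine ⟨Real.exp (-(4 * t + 1)), Real.exp (-(1/2)), Real.exp_pos _,
    Real.exp_lt_exp.2 (by linarith), Real.exp_lt_one_iff.2 (by norm_num), ?_⟩
  intro F _ _
  have hq : (2:ℝ) ≤ (Fintype.card F : ℝ) := by exact_mod_cast Fintype.one_lt_card
  have hq1 : 1 ≤ Fintype.card F := Fintype.card_pos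
  set q : ℝ := (Fintype.card F : ℝ) with hqdef
  have hmain : ∀ j ∈ Finset.Icc 1 t, ∃ T : ℝ,
      (∏' i : ℕ, (1 - 1 / q ^ ((i + 1) * j)) ^ (numIrred F j)) = Real.exp T ∧
      -4 ≤ T ∧ T ≤ 0 ∧ T ≤ ((numIrred F j : ℝ)) * Real.log (1 - 1 / q ^ j) := by
    intro j hj
    refine stmt6_key q hq j (numIrred F j) (Finset.mem_Icc.1 hj).1 ?_
    calc ((numIrred F j : ℕ) : ℝ) ≤ ((Fintype.card F ^ j : ℕ) : ℝ) := by
          exact_mod_cast stmt6_numIrred_le F j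
      _ = q ^ j := by push_cast; rfl
  choose! T hT1 hT2 hT3 hT4 using hmain
  have hprodeq : (∏ j ∈ Finset.Icc 1 t, ∏' i : ℕ,
      (1 - 1 / q ^ ((i + 1) * j)) ^ (numIrred F j)) =
      Real.exp (∑ j ∈ Finset.Icc 1 t, T j) := by
    rw [Real.exp_sum]
    exact Finset.prod_congr rfl fun j hj => hT1 j hj
  rw [hprodeq]
  constructor
  · apply Real.exp_le_exp.2
    have h1 : ∑ j ∈ Finset.Icc 1 t, (-4 : ℝ) ≤ ∑ j ∈ Finset.Icc 1 t, T j :=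
      Finset.sum_le_sum fun j hj => hT2 j hj
    have h2 : ∑ j ∈ Finset.Icc 1 t, (-4 : ℝ) = -4 * t := by
      rw [Finset.sum_const, Nat.card_Icc]
      push_cast; ring
    rw [h2] at h1
    linarith
  · apply Real.exp_le_exp.2
    have h1mem : (1:ℕ) ∈ Finset.Icc 1 t := Finset.mem_Icc.2 ⟨le_refl 1, ht⟩
    rw [← Finset.add_sum_erase _ _ h1mem]
    have hrest : ∑ j ∈ (Finset.Icc 1 t).erase 1, T j ≤ 0 :=
      Finset.sum_nonpos fun j hj => hT3 j (Finset.mem_of_mem_erase hj)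
    have hT1le : T 1 ≤ -(1/2) := by
      have h4 := hT4 1 h1mem
      have hN1 : (q - 1 : ℝ) ≤ (numIrred F 1 : ℝ) := by
        have := stmt6_le_numIrred_one F
        have h' : ((Fintype.card F - 1 : ℕ) : ℝ) ≤ (numIrred F 1 : ℝ) := by exact_mod_cast this
        rwa [Nat.cast_sub hq1, Nat.cast_one] at h'
      have hqpos : (0:ℝ) < q := by linarith
      have hiq : (0:ℝ) < 1 - 1/q := by
        rw [sub_pos, div_lt_one hqpos]; linarith
      have hlog : Real.log (1 - 1/q) ≤ -(1/q) := by
        have := Real.log_le_sub_one_of_pos hiq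
        linarith
      have hlogneg : Real.log (1 - 1/q) ≤ 0 := by
        refine Real.log_nonpos hiq.le ?_
        have : (0:ℝ) < 1/q := by positivity
        linarith
      have hN0 : (0:ℝ) ≤ (numIrred F 1 : ℝ) := Nat.cast_nonneg _
      have step1 : ((numIrred F 1 : ℝ)) * Real.log (1 - 1/q) ≤ (q - 1) * Real.log (1 - 1/q) :=
        mul_le_mul_of_nonpos_right hN1 hlogneg
      have step2 : (q - 1) * Real.log (1 - 1/q) ≤ (q - 1) * (-(1/q)) :=
        mul_le_mul_of_nonneg_left hlog (by linarith)
      have hhalf : (1:ℝ)/q ≤ 1/2 := by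
        rw [div_le_div_iff₀ hqpos (by norm_num)]; linarith
      have step3 : (q - 1) * (-(1/q)) ≤ -(1/2) := by
        have hq1' : (q - 1) * (1/q) = 1 - 1/q := by field_simp
        nlinarith
      rw [pow_one] at h4
      linarith
    linarith
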